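/- Suppose at each step t ≥ 1 the algorithm chases a time-varying target φ̂_t ∈ ℝ^M lying in the probability simplex, selecting m_t ∈ argmax_m (φ̂_{m,t} − S_{m,t−1}/max(t−1,1)), and suppose there is a fixed φ* in the simplex and ε ≥ 0 with ‖φ̂_t − φ*‖_∞ ≤ ε for all t. Then for all t ≥ 1, max_m (S_{m,t}/t − φ*_m) ≤ 2ε + M/t. -/

import Mathlib

open Finset

/-- tracking lemma for a time-varying chased target φ̂_t within sup-distance ε
of a fixed φ* in the simplex: for all t ≥ 1 and all m, S_{m,t}/t − φ*_m ≤ 2ε + M/t. -/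
theorem stmt5 (M : ℕ) (hM : 1 ≤ M) (ε : ℝ) (hε : 0 ≤ ε)
    (φs : Fin M → ℝ) (hpos : ∀ m, 0 ≤ φs m) (hsum : ∑ m, φs m = 1)
    (φhat : ℕ → Fin M → ℝ)
    (hhat : ∀ t, (∀ m, 0 ≤ φhat t m) ∧ ∑ m, φhat t m = 1)
    (hband : ∀ t m, |φhat t m - φs m| ≤ ε)
    (sel : ℕ → Fin M) (S : Fin M → ℕ → ℕ)
    (hS : ∀ m t, S m t = ((Finset.Icc 1 t).filter (fun s => sel s = m)).card)
    (hsel : ∀ t, 1 ≤ t → ∀ j,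
      φhat t j - (S j (t - 1) : ℝ) / ((max (t - 1) 1 : ℕ) : ℝ) ≤
      φhat t (sel t) - (S (sel t) (t - 1) : ℝ) / ((max (t - 1) 1 : ℕ) : ℝ)) :
    ∀ t, 1 ≤ t → ∀ m, (S m t : ℝ) / (t : ℝ) - φs m ≤ 2 * ε + (M : ℝ) / (t : ℝ) := by
  -- total selections up to time t equal t
  have hsum_S : ∀ t, ∑ m, S m t = t := by
    intro t
    have h := Finset.card_eq_sum_card_fiberwise (f := sel) (s := Finset.Icc 1 t)
      (t := Finset.univ) (fun x _ => Finset.mem_univ _)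
    simp only [hS]
    rw [← h, Nat.card_Icc]
    omega
  -- recursion
  have hrec : ∀ t m, S m (t + 1) = S m t + if sel (t + 1) = m then 1 else 0 := by
    intro t m
    rw [hS, hS]
    have hIcc : Finset.Icc 1 (t + 1) = insert (t + 1) (Finset.Icc 1 t) := by
      ext x; simp only [Finset.mem_Icc, Finset.mem_insert]; omega
    rw [hIcc, Finset.filter_insert]
    split
    · rw [Finset.card_insert_of_notMem (by simp)]
    · simp
  -- key bound
  have aux : ∀ t m, (S m t : ℝ) ≤ t * (φs m + ε) + 1 := by
    intro t
    induction t with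
    | zero => intro m; simp [hS]
    | succ t ih =>
      intro m
      have hφε : 0 ≤ φs m + ε := add_nonneg (hpos m) hε
      have hrecm := hrec t m
      by_cases hm : sel (t + 1) = m
      · -- m selected at step t+1
        have hdpos : (0:ℝ) < ((max t 1 : ℕ) : ℝ) := by
          have : 1 ≤ max t 1 := le_max_right t 1
          exact_mod_cast Nat.lt_of_lt_of_le Nat.zero_lt_one this
        have hsel' := hsel (t + 1) (by omega)
        simp only [Nat.add_sub_cancel] at hsel'
        -- sum of the argmax criterion is nonnegative
        have hsumS : (∑ j, ((S j t : ℝ))) = (t : ℝ) := by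
          exact_mod_cast congrArg (Nat.cast : ℕ → ℝ) (hsum_S t)
        have hsum0 : 0 ≤ ∑ j, (φhat (t+1) j - (S j t : ℝ) / ((max t 1 : ℕ) : ℝ)) := by
          rw [Finset.sum_sub_distrib, (hhat (t+1)).2, ← Finset.sum_div, hsumS]
          have : (t : ℝ) / ((max t 1 : ℕ) : ℝ) ≤ 1 := by
            rw [div_le_one hdpos]
            exact_mod_cast le_max_left t 1
          linarith
        have hle : ∑ j, (φhat (t+1) j - (S j t : ℝ) / ((max t 1 : ℕ) : ℝ)) ≤
            (M : ℝ) * (φhat (t+1) (sel (t+1)) - (S (sel (t+1)) t : ℝ) / ((max t 1 : ℕ) : ℝ)) := by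
          calc ∑ j, (φhat (t+1) j - (S j t : ℝ) / ((max t 1 : ℕ) : ℝ))
              ≤ ∑ _j : Fin M, (φhat (t+1) (sel (t+1)) - (S (sel (t+1)) t : ℝ) / ((max t 1 : ℕ) : ℝ)) :=
                Finset.sum_le_sum (fun j _ => hsel' j)
            _ = (M : ℝ) * (φhat (t+1) (sel (t+1)) - (S (sel (t+1)) t : ℝ) / ((max t 1 : ℕ) : ℝ)) := by
                rw [Finset.sum_const, Finset.card_univ, Fintype.card_fin, nsmul_eq_mul]
        have hMpos : (0:ℝ) < M := by exact_mod_cast hM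
        have hkey : 0 ≤ φhat (t+1) m - (S m t : ℝ) / ((max t 1 : ℕ) : ℝ) := by
          rw [← hm]
          nlinarith [le_trans hsum0 hle]
        have hSle : (S m t : ℝ) ≤ ((max t 1 : ℕ) : ℝ) * φhat (t+1) m := by
          have := (div_le_iff₀ hdpos).mp (by linarith : (S m t : ℝ) / ((max t 1 : ℕ) : ℝ) ≤ φhat (t+1) m)
          linarith [this]
        have hbandm := (abs_le.mp (hband (t+1) m)).2
        have hdle : ((max t 1 : ℕ) : ℝ) ≤ (t : ℝ) + 1 := by
          have : max t 1 ≤ t + 1 := by omega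
          exact_mod_cast this
        have : (S m t : ℝ) ≤ ((t:ℝ) + 1) * (φs m + ε) := by
          calc (S m t : ℝ) ≤ ((max t 1 : ℕ) : ℝ) * φhat (t+1) m := hSle
            _ ≤ ((max t 1 : ℕ) : ℝ) * (φs m + ε) := by
                apply mul_le_mul_of_nonneg_left (by linarith) (le_of_lt hdpos)
            _ ≤ ((t:ℝ) + 1) * (φs m + ε) := mul_le_mul_of_nonneg_right hdle hφε
        rw [hrecm, if_pos hm]
        push_cast
        linarith
      · rw [hrecm, if_neg hm]
        have := ih m
        push_cast
        nlinarith
  intro t ht m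
  have htR : (0:ℝ) < t := by exact_mod_cast Nat.lt_of_lt_of_le Nat.zero_lt_one ht
  have h := aux t m
  have hM' : (1:ℝ) ≤ M := by exact_mod_cast hM
  rw [sub_le_iff_le_add, div_le_iff₀ htR]
  have hMt : (M : ℝ) / t * t = M := div_mul_cancel₀ _ (ne_of_gt htR)
  nlinarith [mul_nonneg hε (le_of_lt htR)]
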